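/- Fix z > 0 and λ ≥ 0. For m > 0 with (2m+λ)² ≥ m+λ define G(m) = √((2m+λ)²/(m+λ) − 1) − √(λ(2m+λ)/(m+λ)). Then: (i) every m > 0 with (2m+λ)² ≥ m+λ and G(m) = z satisfies m ≥ m₀ := (1/8)·[z² − 2λ + 1 + √(z⁴ + (12λ+2)z² + 4λ² + 12λ + 1)]; and (ii) there exists exactly one m ≥ m₀ with G(m) = z. -/

import Mathlib

open Real

set_option maxHeartbeats 1600000

/-- Forward direction: from `G m = z` extract the cleared-denominator equation and
the bound `z√λ ≤ 2m+λ`. -/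
lemma fwd_aux (z lam m : ℝ) (hz : 0 < z) (hlam : 0 ≤ lam) (hm : 0 < m)
    (hGz : Real.sqrt ((2 * m + lam) ^ 2 / (m + lam) - 1) -
      Real.sqrt (lam * (2 * m + lam) / (m + lam)) = z) :
    4 * m ^ 2 + 2 * lam * m = (1 + z ^ 2) * (m + lam) +
      2 * z * Real.sqrt (lam * (2 * m + lam) / (m + lam)) * (m + lam) ∧
    z * Real.sqrt lam ≤ 2 * m + lam := by
  have hd : 0 < m + lam := by linarith
  set B := Real.sqrt (lam * (2 * m + lam) / (m + lam)) with hBdef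
  have hB0 : 0 ≤ B := Real.sqrt_nonneg _
  have hBsq : B ^ 2 = lam * (2 * m + lam) / (m + lam) :=
    Real.sq_sqrt (by positivity)
  have key : Real.sqrt ((2 * m + lam) ^ 2 / (m + lam) - 1) = z + B := by linarith
  have hposzB : 0 < z + B := by linarith
  have hs : 0 < (2 * m + lam) ^ 2 / (m + lam) - 1 :=
    Real.sqrt_pos.mp (by rw [key]; exact hposzB)
  have hA : (2 * m + lam) ^ 2 / (m + lam) - 1 = (z + B) ^ 2 := by
    rw [← key, Real.sq_sqrt hs.le]
  have hA1 : (2 * m + lam) ^ 2 / (m + lam) = (z + B) ^ 2 + 1 := by linarith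
  have hA' : (2 * m + lam) ^ 2 = ((z + B) ^ 2 + 1) * (m + lam) :=
    (div_eq_iff hd.ne').mp hA1
  have hB2 : B ^ 2 * (m + lam) = lam * (2 * m + lam) := by
    rw [hBsq]; exact div_mul_cancel₀ _ hd.ne'
  constructor
  · linear_combination hA' + hB2
  · have h1 : z ≤ Real.sqrt ((2 * m + lam) ^ 2 / (m + lam) - 1) := by
      rw [key]; linarith
    have h2 : Real.sqrt lam ≤ Real.sqrt (m + lam) := Real.sqrt_le_sqrt (by linarith)
    have hid : ((2 * m + lam) ^ 2 / (m + lam) - 1) * (m + lam)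
        = (2 * m + lam) ^ 2 - (m + lam) := by
      field_simp
    calc z * Real.sqrt lam
        ≤ Real.sqrt ((2 * m + lam) ^ 2 / (m + lam) - 1) * Real.sqrt (m + lam) :=
          mul_le_mul h1 h2 (Real.sqrt_nonneg _) (Real.sqrt_nonneg _)
      _ = Real.sqrt (((2 * m + lam) ^ 2 / (m + lam) - 1) * (m + lam)) :=
          (Real.sqrt_mul hs.le _).symm
      _ ≤ Real.sqrt ((2 * m + lam) ^ 2) := Real.sqrt_le_sqrt (by rw [hid]; linarith)
      _ = 2 * m + lam := Real.sqrt_sq (by linarith)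

/-- Uniqueness of solutions `m ≥ m₀`. -/
lemma uniq_aux (z lam m₀ : ℝ) (hz : 0 < z) (hlam : 0 ≤ lam) (hm0pos : 0 < m₀)
    (m₁ m₂ : ℝ) (hm₁ : m₀ ≤ m₁) (hm₂ : m₀ ≤ m₂)
    (hG1 : Real.sqrt ((2 * m₁ + lam) ^ 2 / (m₁ + lam) - 1) -
      Real.sqrt (lam * (2 * m₁ + lam) / (m₁ + lam)) = z)
    (hG2 : Real.sqrt ((2 * m₂ + lam) ^ 2 / (m₂ + lam) - 1) -
      Real.sqrt (lam * (2 * m₂ + lam) / (m₂ + lam)) = z) :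
    m₁ = m₂ := by
  have hm1 : 0 < m₁ := lt_of_lt_of_le hm0pos hm₁
  have hm2 : 0 < m₂ := lt_of_lt_of_le hm0pos hm₂
  have hd1 : 0 < m₁ + lam := by linarith
  have hd2 : 0 < m₂ + lam := by linarith
  obtain ⟨hE1, hzB1⟩ := fwd_aux z lam m₁ hz hlam hm1 hG1
  obtain ⟨hE2, hzB2⟩ := fwd_aux z lam m₂ hz hlam hm2 hG2
  set B₁ := Real.sqrt (lam * (2 * m₁ + lam) / (m₁ + lam)) with hB1def
  set B₂ := Real.sqrt (lam * (2 * m₂ + lam) / (m₂ + lam)) with hB2def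
  rcases eq_or_lt_of_le hlam with h0 | hlpos
  · -- lam = 0
    have hB1z : B₁ = 0 := by rw [hB1def, ← h0]; simp
    have hB2z : B₂ = 0 := by rw [hB2def, ← h0]; simp
    rw [hB1z] at hE1
    rw [hB2z] at hE2
    rw [← h0] at hE1 hE2
    have e1 : (4 * m₁) * m₁ = (1 + z ^ 2) * m₁ := by linear_combination hE1
    have e2 : (4 * m₂) * m₂ = (1 + z ^ 2) * m₂ := by linear_combination hE2
    have e1' := mul_right_cancel₀ hm1.ne' e1
    have e2' := mul_right_cancel₀ hm2.ne' e2
    linarith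
  · -- lam > 0
    have hsl : 0 < Real.sqrt lam := Real.sqrt_pos.mpr hlpos
    have hsl2 : Real.sqrt lam * Real.sqrt lam = lam := Real.mul_self_sqrt hlam
    have hB1sq : B₁ ^ 2 * (m₁ + lam) = lam * (2 * m₁ + lam) := by
      rw [hB1def, Real.sq_sqrt (by positivity)]
      exact div_mul_cancel₀ _ hd1.ne'
    have hB2sq : B₂ ^ 2 * (m₂ + lam) = lam * (2 * m₂ + lam) := by
      rw [hB2def, Real.sq_sqrt (by positivity)]
      exact div_mul_cancel₀ _ hd2.ne'
    have hB1lb : Real.sqrt lam ≤ B₁ := by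
      rw [hB1def]
      apply Real.sqrt_le_sqrt
      rw [le_div_iff₀ hd1]
      nlinarith [mul_pos hlpos hm1]
    have hB2lb : Real.sqrt lam ≤ B₂ := by
      rw [hB2def]
      apply Real.sqrt_le_sqrt
      rw [le_div_iff₀ hd2]
      nlinarith [mul_pos hlpos hm2]
    set K := 2 * m₁ * m₂ + 2 * lam * m₁ + 2 * lam * m₂ + lam ^ 2 with hKdef
    have hEstep : 2 * (m₂ - m₁) * K = 2 * z * (B₂ - B₁) * (m₁ + lam) * (m₂ + lam) := by
      rw [hKdef]
      linear_combination (m₁ + lam) * hE2 - (m₂ + lam) * hE1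
    have hEstep2 : (m₂ - m₁) * (K * (B₁ + B₂) - z * lam ^ 2) = 0 := by
      linear_combination (1 / 2) * (B₁ + B₂) * hEstep + z * (m₁ + lam) * hB2sq
        - z * (m₂ + lam) * hB1sq
    have hKpos : 0 < K := by
      rw [hKdef]
      nlinarith [mul_pos hm1 hm2, mul_pos hlpos hm1, mul_pos hlpos hm2, sq_nonneg lam]
    have h2K : lam * (2 * m₂ + lam) < 2 * K := by
      rw [hKdef]
      nlinarith [mul_pos hm1 hm2, mul_pos hlpos hm1]
    have hpos : 0 < K * (B₁ + B₂) - z * lam ^ 2 := by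
      have t0 : z * lam ^ 2 = (z * Real.sqrt lam) * (Real.sqrt lam * lam) := by
        linear_combination (-(z * lam)) * hsl2
      have t1 : (z * Real.sqrt lam) * (Real.sqrt lam * lam)
          ≤ (2 * m₂ + lam) * (Real.sqrt lam * lam) :=
        mul_le_mul_of_nonneg_right hzB2 (mul_nonneg hsl.le hlam)
      have t2 : lam * (2 * m₂ + lam) * Real.sqrt lam < 2 * K * Real.sqrt lam :=
        mul_lt_mul_of_pos_right h2K hsl
      have t3 : 2 * K * Real.sqrt lam ≤ K * (B₁ + B₂) := by
        nlinarith [mul_nonneg hKpos.le (show 0 ≤ B₁ + B₂ - 2 * Real.sqrt lam by linarith)]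
      have tr : (2 * m₂ + lam) * (Real.sqrt lam * lam)
          = lam * (2 * m₂ + lam) * Real.sqrt lam := by ring
      linarith [t0, t1, t2, t3, tr]
    rcases mul_eq_zero.mp hEstep2 with h | h
    · linarith [sub_eq_zero.mp h]
    · exfalso; linarith

theorem stmt7_FAB_feasibility_and_unique_solution
    (z lam : ℝ) (hz : 0 < z) (hlam : 0 ≤ lam)
    (G : ℝ → ℝ)
    (hG : G = fun m => Real.sqrt ((2 * m + lam) ^ 2 / (m + lam) - 1) -
      Real.sqrt (lam * (2 * m + lam) / (m + lam)))
    (m₀ : ℝ)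
    (hm₀ : m₀ = (1 / 8) * (z ^ 2 - 2 * lam + 1 +
      Real.sqrt (z ^ 4 + (12 * lam + 2) * z ^ 2 + 4 * lam ^ 2 + 12 * lam + 1))) :
    (∀ m : ℝ, 0 < m → m + lam ≤ (2 * m + lam) ^ 2 → G m = z → m₀ ≤ m) ∧
      (∃! m : ℝ, m₀ ≤ m ∧ G m = z) := by
  have hD : (0:ℝ) ≤ z ^ 4 + (12 * lam + 2) * z ^ 2 + 4 * lam ^ 2 + 12 * lam + 1 := by
    nlinarith [sq_nonneg (z ^ 2 + 1 - 2 * lam),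
      mul_nonneg hlam (add_nonneg (sq_nonneg z) zero_le_one)]
  have hsD : (Real.sqrt (z ^ 4 + (12 * lam + 2) * z ^ 2 + 4 * lam ^ 2 + 12 * lam + 1)) ^ 2
      = z ^ 4 + (12 * lam + 2) * z ^ 2 + 4 * lam ^ 2 + 12 * lam + 1 := Real.sq_sqrt hD
  have hquad : 4 * m₀ ^ 2 + 2 * lam * m₀ = (z ^ 2 + 1) * (m₀ + lam) := by
    rw [hm₀]
    linear_combination (1 / 16) * hsD
  have hm0pos : 0 < m₀ := by
    rcases eq_or_lt_of_le hlam with h0 | hlpos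
    · have hval : m₀ = (z ^ 2 + 1) / 4 := by
        rw [hm₀, ← h0,
          show z ^ 4 + (12 * (0:ℝ) + 2) * z ^ 2 + 4 * 0 ^ 2 + 12 * 0 + 1
            = (z ^ 2 + 1) ^ 2 by ring,
          Real.sqrt_sq (by positivity)]
        ring
      rw [hval]; positivity
    · have h1 : |z ^ 2 - 2 * lam + 1|
          < Real.sqrt (z ^ 4 + (12 * lam + 2) * z ^ 2 + 4 * lam ^ 2 + 12 * lam + 1) := by
        rw [← Real.sqrt_sq_eq_abs]
        apply Real.sqrt_lt_sqrt (sq_nonneg _)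
        nlinarith [mul_pos hlpos (show (0:ℝ) < z ^ 2 + 1 by positivity)]
      rw [hm₀]
      nlinarith [neg_abs_le (z ^ 2 - 2 * lam + 1), h1]
  have part1 : ∀ m : ℝ, 0 < m → m + lam ≤ (2 * m + lam) ^ 2 → G m = z → m₀ ≤ m := by
    intro m hm _ hGz
    rw [hG] at hGz
    simp only at hGz
    obtain ⟨hE, -⟩ := fwd_aux z lam m hz hlam hm hGz
    have hBn : 0 ≤ Real.sqrt (lam * (2 * m + lam) / (m + lam)) := Real.sqrt_nonneg _
    have hge : (z ^ 2 + 1) * (m + lam) ≤ 4 * m ^ 2 + 2 * lam * m := by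
      nlinarith [mul_nonneg (mul_nonneg (by linarith : (0:ℝ) ≤ 2 * z) hBn)
        (by linarith : (0:ℝ) ≤ m + lam)]
    by_contra hlt
    push_neg at hlt
    have h1 : (z ^ 2 + 1) * (m + lam) * (m₀ + lam) ≤ (4 * m ^ 2 + 2 * lam * m) * (m₀ + lam) :=
      mul_le_mul_of_nonneg_right hge (by linarith)
    have h2 : (z ^ 2 + 1) * (m₀ + lam) * (m + lam) = (4 * m₀ ^ 2 + 2 * lam * m₀) * (m + lam) := by
      linear_combination (m + lam) * hquad.symm
    have hK : 0 < 2 * m * m₀ + 2 * lam * m + 2 * lam * m₀ + lam ^ 2 := by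
      nlinarith [mul_pos hm hm0pos, mul_nonneg hlam hm.le, mul_nonneg hlam hm0pos.le,
        sq_nonneg lam]
    nlinarith [h1, h2, mul_pos (sub_pos.mpr hlt) hK]
  refine ⟨part1, ?_⟩
  -- existence via IVT
  set C := 1 + z ^ 2 + 2 * z * Real.sqrt (2 * lam) with hCdef
  have hCpos : 0 < C := by
    have := Real.sqrt_nonneg (2 * lam)
    rw [hCdef]; nlinarith
  set M := m₀ + C + lam with hMdef
  have hm0M : m₀ ≤ M := by rw [hMdef]; linarith
  have hMpos : 0 < M := by linarith
  have hCM : C < M := by rw [hMdef]; linarith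
  set F : ℝ → ℝ := fun m => 4 * m ^ 2 + 2 * lam * m -
    (1 + z ^ 2 + 2 * z * Real.sqrt (lam * (2 * m + lam) / (m + lam))) * (m + lam) with hFdef
  have hcont : ContinuousOn F (Set.Icc m₀ M) := by
    rw [hFdef]
    apply ContinuousOn.sub (Continuous.continuousOn (by fun_prop))
    apply ContinuousOn.mul _ (Continuous.continuousOn (by fun_prop))
    apply ContinuousOn.add continuousOn_const
    apply ContinuousOn.mul continuousOn_const
    apply ContinuousOn.sqrt
    apply ContinuousOn.div (Continuous.continuousOn (by fun_prop))
      (Continuous.continuousOn (by fun_prop))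
    intro x hx
    have hx1 := hx.1
    have : 0 < x + lam := by linarith
    exact this.ne'
  have hFm0 : F m₀ ≤ 0 := by
    rw [hFdef]
    simp only
    have hB0 : 0 ≤ Real.sqrt (lam * (2 * m₀ + lam) / (m₀ + lam)) := Real.sqrt_nonneg _
    nlinarith [mul_nonneg (mul_nonneg (by linarith : (0:ℝ) ≤ 2 * z) hB0)
      (by linarith : (0:ℝ) ≤ m₀ + lam)]
  have hFM : 0 < F M := by
    have hdM : 0 < M + lam := by linarith
    have hBM : Real.sqrt (lam * (2 * M + lam) / (M + lam)) ≤ Real.sqrt (2 * lam) := by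
      apply Real.sqrt_le_sqrt
      rw [div_le_iff₀ hdM]
      nlinarith [sq_nonneg lam, mul_nonneg hlam hMpos.le]
    have hup : (1 + z ^ 2 + 2 * z * Real.sqrt (lam * (2 * M + lam) / (M + lam))) * (M + lam)
        ≤ C * (M + lam) := by
      apply mul_le_mul_of_nonneg_right _ hdM.le
      rw [hCdef]
      nlinarith [hBM]
    have hlt : C * (M + lam) < M * (M + lam) := mul_lt_mul_of_pos_right hCM hdM
    rw [hFdef]
    simp only
    nlinarith [sq_nonneg M, mul_nonneg hlam hMpos.le]
  have h0mem : (0:ℝ) ∈ Set.Icc (F m₀) (F M) := ⟨hFm0, hFM.le⟩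
  obtain ⟨c, hcmem, hFc⟩ := intermediate_value_Icc hm0M hcont h0mem
  have hcm0 : m₀ ≤ c := hcmem.1
  have hcpos : 0 < c := lt_of_lt_of_le hm0pos hcm0
  have hdc : 0 < c + lam := by linarith
  have hFc' : 4 * c ^ 2 + 2 * lam * c -
      (1 + z ^ 2 + 2 * z * Real.sqrt (lam * (2 * c + lam) / (c + lam))) * (c + lam) = 0 := by
    rw [hFdef] at hFc
    simpa using hFc
  set Bc := Real.sqrt (lam * (2 * c + lam) / (c + lam)) with hBcdef
  have hBc0 : 0 ≤ Bc := Real.sqrt_nonneg _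
  have hBc2 : Bc ^ 2 * (c + lam) = lam * (2 * c + lam) := by
    rw [hBcdef, Real.sq_sqrt (by positivity)]
    exact div_mul_cancel₀ _ hdc.ne'
  have h9 : (2 * c + lam) ^ 2 = ((z + Bc) ^ 2 + 1) * (c + lam) := by
    linear_combination hFc' - hBc2
  have hclaim : (2 * c + lam) ^ 2 / (c + lam) - 1 = (z + Bc) ^ 2 := by
    rw [h9]
    field_simp
    ring
  have hGc : G c = z := by
    rw [hG]
    simp only
    rw [← hBcdef, hclaim, Real.sqrt_sq (by linarith)]
    ring
  refine ⟨c, ⟨hcm0, hGc⟩, ?_⟩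
  intro y hy
  have hyG : Real.sqrt ((2 * y + lam) ^ 2 / (y + lam) - 1) -
      Real.sqrt (lam * (2 * y + lam) / (y + lam)) = z := by
    have := hy.2
    rw [hG] at this
    simpa using this
  have hcG : Real.sqrt ((2 * c + lam) ^ 2 / (c + lam) - 1) -
      Real.sqrt (lam * (2 * c + lam) / (c + lam)) = z := by
    have := hGc
    rw [hG] at this
    simpa using this
  exact uniq_aux z lam m₀ hz hlam hm0pos y c hy.1 hcm0 hyG hcG
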